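/- arXiv:2210.00370 — 5 statements merged into one kernel-verified Lean document; each statement's English description precedes it below -/
import Mathlib

section
/- For all positive integers d and r, the complex linear span of the Choi matrices of CPTP maps φ : M_d(ℂ) → M_r(ℂ) is exactly S(d,r). In particular, S(d,r) contains the identity matrix and is closed under conjugate transpose, so it is an operator system inside M_d(M_r(ℂ)). -/
open scoped Kronecker ComplexOrder Matrix

noncomputable section

/-- Apply a map `φ` between matrix algebras blockwise to a block matrix. -/
def mapBlocks {m A B : Type*} (φ : Matrix A A ℂ → Matrix B B ℂ)
    (M : Matrix (m × A) (m × A) ℂ) : Matrix (m × B) (m × B) ℂ :=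
  Matrix.of fun p q => φ (Matrix.of fun a b => M (p.1, a) (q.1, b)) p.2 q.2

/-- Complete positivity: every blockwise application preserves positive semidefiniteness. -/
def IsCP {A B : Type*} [Fintype A] [Fintype B] (φ : Matrix A A ℂ → Matrix B B ℂ) : Prop :=
  ∀ (n : ℕ) (M : Matrix (Fin n × A) (Fin n × A) ℂ), M.PosSemidef → (mapBlocks φ M).PosSemidef

/-- CPTP: completely positive and trace preserving. -/
def IsCPTP {A B : Type*} [Fintype A] [Fintype B] (φ : Matrix A A ℂ →ₗ[ℂ] Matrix B B ℂ) : Prop :=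
  IsCP ⇑φ ∧ ∀ X, (φ X).trace = X.trace

/-- The Choi matrix of a linear map, `C_φ = Σ_{ij} E_{ij} ⊗ φ(E_{ij})`. -/
def choi {d r : ℕ} (φ : Matrix (Fin d) (Fin d) ℂ →ₗ[ℂ] Matrix (Fin r) (Fin r) ℂ) :
    Matrix (Fin d × Fin r) (Fin d × Fin r) ℂ :=
  Matrix.of fun p q => φ (Matrix.single p.1 q.1 1) p.2 q.2

/-- The trace of the `(i,j)` block of a block matrix. -/
def btr {d r : ℕ} (C : Matrix (Fin d × Fin r) (Fin d × Fin r) ℂ) (i j : Fin d) : ℂ :=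
  ∑ k : Fin r, C (i, k) (j, k)

lemma btr_add {d r : ℕ} (C D : Matrix (Fin d × Fin r) (Fin d × Fin r) ℂ) (i j : Fin d) :
    btr (C + D) i j = btr C i j + btr D i j := by
  simp [btr, Finset.sum_add_distrib]

lemma btr_smul {d r : ℕ} (c : ℂ) (C : Matrix (Fin d × Fin r) (Fin d × Fin r) ℂ) (i j : Fin d) :
    btr (c • C) i j = c * btr C i j := by
  simp [btr, Finset.mul_sum]

/-- The operator system `S(d,r)`: block matrices whose diagonal blocks all have
the same trace and whose off-diagonal blocks have trace zero. -/
def Sset (d r : ℕ) : Set (Matrix (Fin d × Fin r) (Fin d × Fin r) ℂ) :=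
  {C | (∀ i j : Fin d, btr C i i = btr C j j) ∧ ∀ i j : Fin d, i ≠ j → btr C i j = 0}

/-- `S(d,r)` as a subspace. -/
def Ssub (d r : ℕ) : Submodule ℂ (Matrix (Fin d × Fin r) (Fin d × Fin r) ℂ) where
  carrier := Sset d r
  add_mem' := by
    rintro C D ⟨hC1, hC2⟩ ⟨hD1, hD2⟩
    refine ⟨fun i j => ?_, fun i j hij => ?_⟩
    · rw [btr_add, btr_add, hC1 i j, hD1 i j]
    · rw [btr_add, hC2 i j hij, hD2 i j hij, add_zero]
  zero_mem' := by
    refine ⟨fun i j => ?_, fun i j _ => ?_⟩ <;> simp [btr]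
  smul_mem' := by
    rintro c C ⟨hC1, hC2⟩
    refine ⟨fun i j => ?_, fun i j hij => ?_⟩
    · rw [btr_smul, btr_smul, hC1 i j]
    · rw [btr_smul, hC2 i j hij, mul_zero]

/-- The partial trace over the second factor. -/
def ptrace {d r : ℕ} (C : Matrix (Fin d × Fin r) (Fin d × Fin r) ℂ) : Matrix (Fin d) (Fin d) ℂ :=
  Matrix.of fun i j => btr C i j

open Matrix Finset

-- aux lemmas
lemma aux_sum4 {α β γ δ M : Type*} [Fintype α] [Fintype β] [Fintype γ] [Fintype δ]
    [AddCommMonoid M] (f : α → β → γ → δ → M) :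
    (∑ a, ∑ b, ∑ c, ∑ e, f a b c e) = ∑ c, ∑ e, ∑ a, ∑ b, f a b c e := by
  calc (∑ a, ∑ b, ∑ c, ∑ e, f a b c e)
      = ∑ a, ∑ b, ∑ ce : γ × δ, f a b ce.1 ce.2 := by
        simp [Fintype.sum_prod_type]
    _ = ∑ a, ∑ ce : γ × δ, ∑ b, f a b ce.1 ce.2 :=
        Finset.sum_congr rfl fun _ _ => Finset.sum_comm
    _ = ∑ ce : γ × δ, ∑ a, ∑ b, f a b ce.1 ce.2 := Finset.sum_comm
    _ = ∑ c, ∑ e, ∑ a, ∑ b, f a b c e := by simp [Fintype.sum_prod_type]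

lemma psd_smul_real {n : Type*} [Fintype n] {M : Matrix n n ℂ} (hM : M.PosSemidef)
    {t : ℝ} (ht : 0 ≤ t) : ((t : ℂ) • M).PosSemidef := by
  constructor
  · unfold Matrix.IsHermitian
    rw [conjTranspose_smul, hM.1]
    simp
  · exact (hM.smul (Complex.zero_le_real.mpr ht)).2

lemma exists_shift_psd {n : Type*} [Fintype n] [DecidableEq n] {H : Matrix n n ℂ}
    (hH : H.IsHermitian) : ∃ c : ℝ, 0 ≤ c ∧ ((c : ℂ) • 1 + H).PosSemidef := by
  classical
  set c : ℝ := ∑ i, |hH.eigenvalues i| with hc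
  refine ⟨c, Finset.sum_nonneg fun i _ => abs_nonneg _, ?_⟩
  set U : Matrix n n ℂ := (hH.eigenvectorUnitary : Matrix n n ℂ) with hU
  have hUU : U * star U = 1 := (Matrix.mem_unitaryGroup_iff).mp hH.eigenvectorUnitary.2
  have key : (c : ℂ) • 1 + H = U * diagonal (fun i => ((c + hH.eigenvalues i : ℝ) : ℂ)) * star U := by
    have hdiag : diagonal (fun i => ((c + hH.eigenvalues i : ℝ) : ℂ))
        = (c : ℂ) • 1 + diagonal (RCLike.ofReal ∘ hH.eigenvalues) := by
      rw [smul_eq_diagonal_mul, mul_one, diagonal_add]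
      funext i
      push_cast
      simp
    rw [hdiag, mul_add, add_mul, Matrix.mul_smul, Matrix.smul_mul, mul_one, hUU]
    exact congrArg ((c : ℂ) • 1 + ·) hH.spectral_theorem
  rw [key]
  have : PosSemidef (diagonal (fun i => ((c + hH.eigenvalues i : ℝ) : ℂ))) := by
    refine PosSemidef.diagonal fun i => ?_
    refine Complex.zero_le_real.mpr ?_
    have h1 : |hH.eigenvalues i| ≤ c := by
      rw [hc]
      exact Finset.single_le_sum (f := fun j => |hH.eigenvalues j|)
        (fun j _ => abs_nonneg _) (Finset.mem_univ i)
    linarith [neg_abs_le (hH.eigenvalues i)]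
  simpa [Matrix.star_eq_conjTranspose] using this.mul_mul_conjTranspose_same U

/-- The linear map whose Choi matrix is `M`. -/
def phiM {d r : ℕ} (M : Matrix (Fin d × Fin r) (Fin d × Fin r) ℂ) :
    Matrix (Fin d) (Fin d) ℂ →ₗ[ℂ] Matrix (Fin r) (Fin r) ℂ where
  toFun X := Matrix.of fun p q => ∑ i, ∑ j, X i j * M (i, p) (j, q)
  map_add' X Y := by
    ext p q
    simp [Matrix.add_apply, add_mul, Finset.sum_add_distrib]
  map_smul' c X := by
    ext p q
    simp [Matrix.smul_apply, Finset.mul_sum, mul_assoc]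

lemma choi_phiM {d r : ℕ} (M : Matrix (Fin d × Fin r) (Fin d × Fin r) ℂ) :
    choi (phiM M) = M := by
  ext ⟨i, p⟩ ⟨j, q⟩
  simp only [choi, phiM, Matrix.of_apply, LinearMap.coe_mk, AddHom.coe_mk,
    Matrix.single, ite_mul, one_mul, zero_mul]
  rw [Finset.sum_eq_single i]
  · rw [Finset.sum_eq_single j] <;> simp +contextual [eq_comm]
  · intro b _ hb
    apply Finset.sum_eq_zero
    intro e _
    simp [Ne.symm hb]
  · simp

lemma trace_phiM {d r : ℕ} {M : Matrix (Fin d × Fin r) (Fin d × Fin r) ℂ}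
    (hM : ∀ i j, btr M i j = if i = j then 1 else 0)
    (X : Matrix (Fin d) (Fin d) ℂ) : (phiM M X).trace = X.trace := by
  simp only [Matrix.trace, Matrix.diag, phiM, LinearMap.coe_mk, AddHom.coe_mk, Matrix.of_apply]
  rw [Finset.sum_comm]
  calc (∑ i, ∑ p, ∑ j, X i j * M (i, p) (j, p))
      = ∑ i, ∑ j, ∑ p, X i j * M (i, p) (j, p) :=
        Finset.sum_congr rfl fun _ _ => Finset.sum_comm
    _ = ∑ i, ∑ j, X i j * btr M i j := by
        simp [btr, Finset.mul_sum]
    _ = ∑ i, X i i := by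
        refine Finset.sum_congr rfl fun i _ => ?_
        rw [Finset.sum_eq_single i] <;> simp +contextual [hM, eq_comm]

theorem psd_iff_eq_conjTranspose_mul_self_aux {n : Type*} [Fintype n] [DecidableEq n]
    {M : Matrix n n ℂ} : M.PosSemidef ↔ ∃ B : Matrix n n ℂ, M = Bᴴ * B := by
  open scoped MatrixOrder in
  refine ⟨fun h => ?_, fun ⟨B, hB⟩ => hB ▸ posSemidef_conjTranspose_mul_self B⟩
  obtain ⟨B, hB⟩ := CStarAlgebra.nonneg_iff_eq_star_mul_self.mp h.nonneg
  exact ⟨B, hB⟩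

lemma isCP_phiM {d r : ℕ} {M : Matrix (Fin d × Fin r) (Fin d × Fin r) ℂ}
    (hM : M.PosSemidef) : IsCP ⇑(phiM M) := by
  intro n N hN
  obtain ⟨A, hA⟩ := psd_iff_eq_conjTranspose_mul_self_aux.mp hN
  obtain ⟨B, hB⟩ := psd_iff_eq_conjTranspose_mul_self_aux.mp hM
  set L : Matrix ((Fin n × Fin d) × (Fin d × Fin r)) (Fin n × Fin r) ℂ :=
    Matrix.of fun z w => ∑ j, A z.1 (w.1, j) * B z.2 (j, w.2) with hL
  have key : mapBlocks (⇑(phiM M)) N = Lᴴ * L := by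
    ext ⟨s, p⟩ ⟨t, q⟩
    simp only [mapBlocks, Matrix.of_apply, phiM, LinearMap.coe_mk, AddHom.coe_mk,
      Matrix.mul_apply, Matrix.conjTranspose_apply, hA, hB, hL]
    calc (∑ i, ∑ j, (∑ v, star (A v (s, i)) * A v (t, j)) *
            (∑ u, star (B u (i, p)) * B u (j, q)))
        = ∑ i, ∑ j, ∑ v, ∑ u,
            (star (A v (s, i)) * star (B u (i, p))) * (A v (t, j) * B u (j, q)) := by
          refine Finset.sum_congr rfl fun i _ => Finset.sum_congr rfl fun j _ => ?_
          rw [Finset.sum_mul_sum]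
          exact Finset.sum_congr rfl fun v _ => Finset.sum_congr rfl fun u _ => by ring
      _ = ∑ v, ∑ u, ∑ i, ∑ j,
            (star (A v (s, i)) * star (B u (i, p))) * (A v (t, j) * B u (j, q)) :=
          aux_sum4 _
      _ = ∑ z : (Fin n × Fin d) × (Fin d × Fin r),
            star (∑ j, A z.1 (s, j) * B z.2 (j, p)) * (∑ j, A z.1 (t, j) * B z.2 (j, q)) := by
          conv_rhs => rw [Fintype.sum_prod_type]
          refine Finset.sum_congr rfl fun v _ => Finset.sum_congr rfl fun u _ => ?_
          rw [star_sum, Finset.sum_mul_sum]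
          simp [star_mul']
  rw [key]
  exact Matrix.posSemidef_conjTranspose_mul_self L

lemma btr_one {d r : ℕ} (i j : Fin d) :
    btr (1 : Matrix (Fin d × Fin r) (Fin d × Fin r) ℂ) i j = if i = j then (r : ℂ) else 0 := by
  by_cases h : i = j
  · subst h
    simp [btr, Matrix.one_apply]
  · simp [btr, Matrix.one_apply, Prod.ext_iff, h]

lemma btr_conjTranspose {d r : ℕ} (C : Matrix (Fin d × Fin r) (Fin d × Fin r) ℂ) (i j : Fin d) :
    btr Cᴴ i j = star (btr C j i) := by
  simp [btr, Matrix.conjTranspose_apply, star_sum]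

lemma btr_addM {d r : ℕ} (C D : Matrix (Fin d × Fin r) (Fin d × Fin r) ℂ) (i j : Fin d) :
    btr (C + D) i j = btr C i j + btr D i j := by
  simp [btr, Finset.sum_add_distrib]

lemma btr_smulM {d r : ℕ} (c : ℂ) (C : Matrix (Fin d × Fin r) (Fin d × Fin r) ℂ) (i j : Fin d) :
    btr (c • C) i j = c * btr C i j := by
  simp [btr, Finset.mul_sum]

lemma btr_choi_trace {d r : ℕ} (φ : Matrix (Fin d) (Fin d) ℂ →ₗ[ℂ] Matrix (Fin r) (Fin r) ℂ)
    (i j : Fin d) : btr (choi φ) i j = (φ (Matrix.single i j 1)).trace := by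
  simp [btr, choi, Matrix.trace, Matrix.diag]

lemma trace_stdBasis {d : ℕ} (i j : Fin d) :
    (Matrix.single i j (1 : ℂ)).trace = if i = j then 1 else 0 := by
  by_cases h : i = j
  · subst h
    simp [Matrix.trace, Matrix.diag, Matrix.single]
  · simp only [Matrix.trace, Matrix.diag, Matrix.single, Matrix.of_apply, if_neg h]
    rw [Finset.sum_eq_zero]
    intro k _
    by_cases hik : i = k
    · subst hik
      simp only [true_and, ite_eq_right_iff]
      exact fun hji => absurd hji.symm h
    · simp [hik]

def gen (d r : ℕ) : Set (Matrix (Fin d × Fin r) (Fin d × Fin r) ℂ) :=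
  {C | ∃ φ : Matrix (Fin d) (Fin d) ℂ →ₗ[ℂ] Matrix (Fin r) (Fin r) ℂ, IsCPTP φ ∧ C = choi φ}

lemma mem_gen {d r : ℕ} {M : Matrix (Fin d × Fin r) (Fin d × Fin r) ℂ} (hpsd : M.PosSemidef)
    (hbtr : ∀ i j, btr M i j = if i = j then 1 else 0) : M ∈ gen d r :=
  ⟨phiM M, ⟨isCP_phiM hpsd, trace_phiM hbtr⟩, (choi_phiM M).symm⟩

lemma one_mem_span {d r : ℕ} (hr : 0 < r) :
    (1 : Matrix (Fin d × Fin r) (Fin d × Fin r) ℂ) ∈ Submodule.span ℂ (gen d r) := by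
  have hrC : (r : ℂ) ≠ 0 := Nat.cast_ne_zero.mpr hr.ne'
  have h0 : (((r : ℝ)⁻¹ : ℝ) : ℂ) • (1 : Matrix (Fin d × Fin r) (Fin d × Fin r) ℂ) ∈ gen d r := by
    apply mem_gen
    · exact psd_smul_real Matrix.PosSemidef.one (by positivity)
    · intro i j
      rw [btr_smulM, btr_one]
      by_cases h : i = j
      · push_cast
        field_simp [h]
        simp [h]
      · simp [h]
  have h1 := Submodule.smul_mem (Submodule.span ℂ (gen d r)) ((r : ℂ))
    (Submodule.subset_span h0)
  have : ((r : ℂ)) • ((((r : ℝ)⁻¹ : ℝ) : ℂ) • (1 : Matrix (Fin d × Fin r) (Fin d × Fin r) ℂ))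
      = 1 := by
    rw [smul_smul]
    push_cast
    rw [mul_inv_cancel₀ hrC, one_smul]
  rwa [this] at h1

lemma herm_mem_span {d r : ℕ} (hd : 0 < d) (hr : 0 < r)
    {H : Matrix (Fin d × Fin r) (Fin d × Fin r) ℂ} (hH : H.IsHermitian) (hS : H ∈ Sset d r) :
    H ∈ Submodule.span ℂ (gen d r) := by
  obtain ⟨hS1, hS2⟩ := hS
  set i₀ : Fin d := ⟨0, hd⟩
  set t : ℂ := btr H i₀ i₀ with ht
  -- t is real
  have htreal : (starRingEnd ℂ) t = t := by
    rw [ht]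
    unfold btr
    rw [map_sum]
    refine Finset.sum_congr rfl fun k _ => ?_
    have := congrFun (congrFun hH (i₀, k)) (i₀, k)
    simpa [Matrix.conjTranspose_apply] using this
  set τ : ℝ := t.re with hτ
  have htτ : t = (τ : ℂ) := ((Complex.conj_eq_iff_re).mp htreal).symm
  obtain ⟨c₀, hc₀, hpsd₀⟩ := exists_shift_psd hH
  set c : ℝ := c₀ + |τ| + 1 with hc
  have hcpsd : (((c : ℝ) : ℂ) • 1 + H).PosSemidef := by
    have h1 : ((c : ℝ) : ℂ) • (1 : Matrix (Fin d × Fin r) (Fin d × Fin r) ℂ) + H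
        = (((|τ| + 1 : ℝ)) : ℂ) • 1 + (((c₀ : ℝ) : ℂ) • 1 + H) := by
      rw [hc]
      push_cast
      module
    rw [h1]
    exact ((psd_smul_real Matrix.PosSemidef.one (by positivity)).add hpsd₀)
  set α : ℝ := c * r + τ with hα
  have hrR : (1 : ℝ) ≤ (r : ℝ) := by exact_mod_cast hr
  have hαpos : 0 < α := by
    have habs : -|τ| ≤ τ := neg_abs_le τ
    have : c ≤ c * r := le_mul_of_one_le_right (by positivity) hrR
    simp only [hα, hc]
    nlinarith
  set M : Matrix (Fin d × Fin r) (Fin d × Fin r) ℂ :=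
    ((α⁻¹ : ℝ) : ℂ) • (((c : ℝ) : ℂ) • 1 + H) with hM
  have hbtrH : ∀ i, btr H i i = t := fun i => hS1 i i₀
  have hMgen : M ∈ gen d r := by
    apply mem_gen
    · exact psd_smul_real hcpsd (by positivity)
    · intro i j
      rw [hM, btr_smulM, btr_addM, btr_smulM, btr_one]
      by_cases h : i = j
      · subst h
        rw [hbtrH, htτ, if_pos rfl, if_pos rfl]
        push_cast
        rw [show ((c : ℂ) * (r : ℂ) + (τ : ℂ)) = ((α : ℝ) : ℂ) by rw [hα]; push_cast; ring]
        exact inv_mul_cancel₀ (Complex.ofReal_ne_zero.mpr hαpos.ne')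
      · rw [hS2 i j h, if_neg h, if_neg h]
        ring
  have hMspan : M ∈ Submodule.span ℂ (gen d r) := Submodule.subset_span hMgen
  have h1span := one_mem_span (d := d) hr
  have hfinal : H = ((α : ℝ) : ℂ) • M - ((c : ℝ) : ℂ) • 1 := by
    rw [hM, smul_smul, ← Complex.ofReal_mul, mul_inv_cancel₀ hαpos.ne']
    push_cast
    module
  rw [hfinal]
  exact Submodule.sub_mem _ (Submodule.smul_mem _ _ hMspan) (Submodule.smul_mem _ _ h1span)

lemma sset_one {d r : ℕ} : (1 : Matrix (Fin d × Fin r) (Fin d × Fin r) ℂ) ∈ Sset d r := by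
  constructor
  · intro i j
    rw [btr_one, btr_one, if_pos rfl, if_pos rfl]
  · intro i j hij
    rw [btr_one, if_neg hij]

lemma sset_conjTranspose {d r : ℕ} {C : Matrix (Fin d × Fin r) (Fin d × Fin r) ℂ}
    (hC : C ∈ Sset d r) : Cᴴ ∈ Sset d r := by
  obtain ⟨h1, h2⟩ := hC
  constructor
  · intro i j
    rw [btr_conjTranspose, btr_conjTranspose, h1 i j]
  · intro i j hij
    rw [btr_conjTranspose, h2 j i (Ne.symm hij), star_zero]

lemma choi_mem_sset {d r : ℕ} {φ : Matrix (Fin d) (Fin d) ℂ →ₗ[ℂ] Matrix (Fin r) (Fin r) ℂ}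
    (hφ : IsCPTP φ) : choi φ ∈ Sset d r := by
  have hbtr : ∀ i j, btr (choi φ) i j = if i = j then 1 else 0 := by
    intro i j
    rw [btr_choi_trace, hφ.2, trace_stdBasis]
  constructor
  · intro i j
    rw [hbtr, hbtr, if_pos rfl, if_pos rfl]
  · intro i j hij
    rw [hbtr, if_neg hij]

lemma sset_mem_span {d r : ℕ} (hd : 0 < d) (hr : 0 < r)
    {C : Matrix (Fin d × Fin r) (Fin d × Fin r) ℂ} (hC : C ∈ Sset d r) :
    C ∈ Submodule.span ℂ (gen d r) := by
  obtain ⟨h1, h2⟩ := hC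
  set H1 : Matrix (Fin d × Fin r) (Fin d × Fin r) ℂ := (2⁻¹ : ℂ) • (C + Cᴴ) with hH1
  set H2 : Matrix (Fin d × Fin r) (Fin d × Fin r) ℂ := (-(Complex.I) * 2⁻¹) • (C - Cᴴ) with hH2
  have hCH : Cᴴ ∈ Sset d r := sset_conjTranspose ⟨h1, h2⟩
  have hherm1 : H1.IsHermitian := by
    unfold Matrix.IsHermitian
    rw [hH1, Matrix.conjTranspose_smul, Matrix.conjTranspose_add,
      Matrix.conjTranspose_conjTranspose]
    rw [show star (2⁻¹ : ℂ) = (2⁻¹ : ℂ) from by simp, add_comm]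
  have hherm2 : H2.IsHermitian := by
    unfold Matrix.IsHermitian
    rw [hH2, Matrix.conjTranspose_smul, Matrix.conjTranspose_sub,
      Matrix.conjTranspose_conjTranspose]
    rw [show star (-(Complex.I) * 2⁻¹ : ℂ) = Complex.I * 2⁻¹ from by
      simp [Complex.ext_iff]]
    module
  have hmem1 : H1 ∈ Sset d r := by
    constructor
    · intro i j
      rw [hH1, btr_smulM, btr_smulM, btr_addM, btr_addM, h1 i j, hCH.1 i j]
    · intro i j hij
      rw [hH1, btr_smulM, btr_addM, h2 i j hij, hCH.2 i j hij]
      ring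
  have btr_subM : ∀ (A B : Matrix (Fin d × Fin r) (Fin d × Fin r) ℂ) (i j : Fin d),
      btr (A - B) i j = btr A i j - btr B i j := by
    intro A B i j
    simp [btr, Finset.sum_sub_distrib]
  have hmem2 : H2 ∈ Sset d r := by
    constructor
    · intro i j
      rw [hH2, btr_smulM, btr_smulM, btr_subM, btr_subM, h1 i j, hCH.1 i j]
    · intro i j hij
      rw [hH2, btr_smulM, btr_subM, h2 i j hij, hCH.2 i j hij]
      ring
  have hspan1 := herm_mem_span hd hr hherm1 hmem1
  have hspan2 := herm_mem_span hd hr hherm2 hmem2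
  have hdecomp : C = H1 + Complex.I • H2 := by
    rw [hH1, hH2, smul_smul]
    have : Complex.I * (-(Complex.I) * 2⁻¹) = (2⁻¹ : ℂ) := by
      rw [show Complex.I * (-(Complex.I) * 2⁻¹) = -(Complex.I * Complex.I) * 2⁻¹ by ring,
        Complex.I_mul_I]
      norm_num
    rw [this]
    module
  rw [hdecomp]
  exact Submodule.add_mem _ hspan1 (Submodule.smul_mem _ _ hspan2)

/-- the span of Choi matrices of CPTP maps `M_d → M_r` is exactly `S(d,r)`,
and `S(d,r)` contains the identity and is closed under conjugate transpose
(so it is an operator system in `M_d(M_r(ℂ))`). -/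
theorem span_choi_CPTP_eq_S (d r : ℕ) (hd : 0 < d) (hr : 0 < r) :
    (Submodule.span ℂ {C : Matrix (Fin d × Fin r) (Fin d × Fin r) ℂ |
        ∃ φ : Matrix (Fin d) (Fin d) ℂ →ₗ[ℂ] Matrix (Fin r) (Fin r) ℂ, IsCPTP φ ∧ C = choi φ} :
      Set (Matrix (Fin d × Fin r) (Fin d × Fin r) ℂ)) = Sset d r ∧
    (1 : Matrix (Fin d × Fin r) (Fin d × Fin r) ℂ) ∈ Sset d r ∧
    ∀ C ∈ Sset d r, Cᴴ ∈ Sset d r := by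
  have hgen : {C : Matrix (Fin d × Fin r) (Fin d × Fin r) ℂ |
      ∃ φ : Matrix (Fin d) (Fin d) ℂ →ₗ[ℂ] Matrix (Fin r) (Fin r) ℂ, IsCPTP φ ∧ C = choi φ}
      = gen d r := rfl
  refine ⟨?_, sset_one, fun C hC => sset_conjTranspose hC⟩
  rw [hgen]
  apply Set.Subset.antisymm
  · have hle : Submodule.span ℂ (gen d r) ≤ Ssub d r := by
      rw [Submodule.span_le]
      rintro C ⟨φ, hφ, rfl⟩
      exact choi_mem_sset hφ
    exact fun C hC => hle hC
  · intro C hC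
    exact sset_mem_span hd hr hC


end
end

section
/- Let d₁,r₁,d₂,r₂ be positive integers and let Γ̃ : S(d₁,r₁) → M_{d₂}(M_{r₂}(ℂ)) be a linear map which is CPTP-preserving: whenever C ∈ S(d₁,r₁) is positive semidefinite with Tr_{r₁}(C) = I_{d₁}, then Γ̃(C) is positive semidefinite with Tr_{r₂}(Γ̃(C)) = I_{d₂}. Then the following are equivalent: (i) for all positive integers d₃,r₃, the unique linear map on span{C₁ ⊗ C₂ : C₁ ∈ S(d₁,r₁), C₂ ∈ S(d₃,r₃)} ⊆ M_{d₁}(M_{r₁}(ℂ)) ⊗ M_{d₃}(M_{r₃}(ℂ)) determined by C₁ ⊗ C₂ ↦ Γ̃(C₁) ⊗ C₂ sends every positive semidefinite matrix lying in this span to a positive semidefinite matrix; (ii) Γ̃ is completely positive, i.e., for every n ≥ 1, whenever an n×n block matrix with all blocks in S(d₁,r₁) is positive semidefinite, its blockwise image under Γ̃ is positive semidefinite. -/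
open scoped Kronecker ComplexOrder Matrix

noncomputable section

namespace QSCAux

/-- Extract the `(u,v)` block (over the second index factor) of a matrix on `A × ι`. -/
def blk2 (A : Type*) {ι : Type*} (u v : ι) :
    Matrix (A × ι) (A × ι) ℂ →ₗ[ℂ] Matrix A A ℂ where
  toFun X := Matrix.of fun a b => X (a, u) (b, v)
  map_add' X Y := rfl
  map_smul' c X := rfl

lemma blk2_kron {A ι : Type*} (u v : ι) (C₁ : Matrix A A ℂ) (C₂ : Matrix ι ι ℂ) :
    blk2 A u v (C₁ ⊗ₖ C₂) = C₂ u v • C₁ := by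
  ext a b
  show (C₁ ⊗ₖ C₂) (a, u) (b, v) = (C₂ u v • C₁) a b
  simp [blk2, Matrix.kroneckerMap_apply, mul_comm]

/-- Apply `φ` blockwise over the second index factor, as a linear map. -/
def tmap {A B : Type*} (φ : Matrix A A ℂ →ₗ[ℂ] Matrix B B ℂ) (ι : Type*) :
    Matrix (A × ι) (A × ι) ℂ →ₗ[ℂ] Matrix (B × ι) (B × ι) ℂ where
  toFun X := Matrix.of fun p q => φ (blk2 A p.2 q.2 X) p.1 q.1
  map_add' X Y := by
    ext p q
    simp [Matrix.add_apply, map_add]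
  map_smul' c X := by
    ext p q
    simp [Matrix.smul_apply, map_smul]

lemma tmap_apply {A B : Type*} (φ : Matrix A A ℂ →ₗ[ℂ] Matrix B B ℂ) {ι : Type*}
    (X : Matrix (A × ι) (A × ι) ℂ) (p q : B × ι) :
    tmap φ ι X p q = φ (blk2 A p.2 q.2 X) p.1 q.1 := rfl

end QSCAux

/-- for a CPTP-preserving linear map `Γ̃ : S(d₁,r₁) → M_{d₂}(M_{r₂})`,
the following are equivalent:
(i) for all `d₃, r₃`, any linear map on the span of `{C₁ ⊗ C₂ : C₁ ∈ S(d₁,r₁), C₂ ∈ S(d₃,r₃)}`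
determined by `C₁ ⊗ C₂ ↦ Γ̃(C₁) ⊗ C₂` sends every positive semidefinite element of that
span to a positive semidefinite matrix;
(ii) `Γ̃` is completely positive on the operator system `S(d₁,r₁)`. -/
theorem QSC_tensor_stability_iff_completelyPositive (d₁ r₁ d₂ r₂ : ℕ)
    (hd₁ : 0 < d₁) (hr₁ : 0 < r₁) (hd₂ : 0 < d₂) (hr₂ : 0 < r₂)
    (Γ : ↥(Ssub d₁ r₁) →ₗ[ℂ] Matrix (Fin d₂ × Fin r₂) (Fin d₂ × Fin r₂) ℂ)
    (hΓ : ∀ C : ↥(Ssub d₁ r₁), (C : Matrix (Fin d₁ × Fin r₁) (Fin d₁ × Fin r₁) ℂ).PosSemidef →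
      ptrace (C : Matrix (Fin d₁ × Fin r₁) (Fin d₁ × Fin r₁) ℂ) = 1 →
      (Γ C).PosSemidef ∧ ptrace (Γ C) = 1) :
    (∀ d₃ r₃ : ℕ,
      ∀ L : ↥(Submodule.span ℂ
          {X : Matrix ((Fin d₁ × Fin r₁) × (Fin d₃ × Fin r₃))
              ((Fin d₁ × Fin r₁) × (Fin d₃ × Fin r₃)) ℂ |
            ∃ C₁ ∈ Ssub d₁ r₁, ∃ C₂ ∈ Ssub d₃ r₃, X = C₁ ⊗ₖ C₂}) →ₗ[ℂ]
          Matrix ((Fin d₂ × Fin r₂) × (Fin d₃ × Fin r₃))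
            ((Fin d₂ × Fin r₂) × (Fin d₃ × Fin r₃)) ℂ,
        (∀ (C₁ : ↥(Ssub d₁ r₁)) (C₂ : ↥(Ssub d₃ r₃))
            (h : ((C₁ : Matrix (Fin d₁ × Fin r₁) (Fin d₁ × Fin r₁) ℂ) ⊗ₖ
                  (C₂ : Matrix (Fin d₃ × Fin r₃) (Fin d₃ × Fin r₃) ℂ)) ∈
                Submodule.span ℂ
                  {X : Matrix ((Fin d₁ × Fin r₁) × (Fin d₃ × Fin r₃))
                      ((Fin d₁ × Fin r₁) × (Fin d₃ × Fin r₃)) ℂ |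
                    ∃ C₁ ∈ Ssub d₁ r₁, ∃ C₂ ∈ Ssub d₃ r₃, X = C₁ ⊗ₖ C₂}),
          L ⟨_, h⟩ = (Γ C₁) ⊗ₖ (C₂ : Matrix (Fin d₃ × Fin r₃) (Fin d₃ × Fin r₃) ℂ)) →
        ∀ X : ↥(Submodule.span ℂ
            {X : Matrix ((Fin d₁ × Fin r₁) × (Fin d₃ × Fin r₃))
                ((Fin d₁ × Fin r₁) × (Fin d₃ × Fin r₃)) ℂ |
              ∃ C₁ ∈ Ssub d₁ r₁, ∃ C₂ ∈ Ssub d₃ r₃, X = C₁ ⊗ₖ C₂}),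
          (X : Matrix ((Fin d₁ × Fin r₁) × (Fin d₃ × Fin r₃))
            ((Fin d₁ × Fin r₁) × (Fin d₃ × Fin r₃)) ℂ).PosSemidef → (L X).PosSemidef)
    ↔
    (∀ (n : ℕ) (M : Matrix (Fin n × (Fin d₁ × Fin r₁)) (Fin n × (Fin d₁ × Fin r₁)) ℂ)
        (hM : ∀ k l : Fin n,
          (Matrix.of fun a b : Fin d₁ × Fin r₁ => M (k, a) (l, b)) ∈ Ssub d₁ r₁),
      M.PosSemidef →
      (Matrix.of fun p q : Fin n × (Fin d₂ × Fin r₂) =>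
        Γ ⟨Matrix.of fun a b : Fin d₁ × Fin r₁ => M (p.1, a) (q.1, b),
          hM p.1 q.1⟩ p.2 q.2).PosSemidef) := by
  classical
  obtain ⟨Q, hQ⟩ := Submodule.exists_isCompl (Ssub d₁ r₁)
  set π := Submodule.linearProjOfIsCompl _ _ hQ with hπ
  set Γ' : Matrix (Fin d₁ × Fin r₁) (Fin d₁ × Fin r₁) ℂ →ₗ[ℂ]
      Matrix (Fin d₂ × Fin r₂) (Fin d₂ × Fin r₂) ℂ :=
    Γ.comp π with hΓ'def
  have hΓ'' : ∀ (x : Matrix (Fin d₁ × Fin r₁) (Fin d₁ × Fin r₁) ℂ) (hx : x ∈ Ssub d₁ r₁),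
      Γ' x = Γ ⟨x, hx⟩ := by
    intro x hx
    have hπx : π x = ⟨x, hx⟩ := Submodule.linearProjOfIsCompl_apply_left hQ ⟨x, hx⟩
    rw [hΓ'def, LinearMap.comp_apply, hπx]
  -- `tmap Γ'` agrees with `Γ ⊗ id` on elementary tensors
  have tmap_tensor : ∀ {ι : Type} (C₁ : ↥(Ssub d₁ r₁)) (C₂ : Matrix ι ι ℂ),
      QSCAux.tmap Γ' ι ((C₁ : Matrix (Fin d₁ × Fin r₁) (Fin d₁ × Fin r₁) ℂ) ⊗ₖ C₂)
        = (Γ C₁) ⊗ₖ C₂ := by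
    intro ι C₁ C₂
    ext ⟨b, u⟩ ⟨b', v⟩
    rw [QSCAux.tmap_apply, QSCAux.blk2_kron, map_smul, hΓ'' _ C₁.2]
    simp [Matrix.kroneckerMap_apply, mul_comm]
  constructor
  · -- (i) → (ii)
    intro hi n M hM hMpsd
    set s : Set (Matrix ((Fin d₁ × Fin r₁) × (Fin 1 × Fin n))
        ((Fin d₁ × Fin r₁) × (Fin 1 × Fin n)) ℂ) :=
      {X | ∃ C₁ ∈ Ssub d₁ r₁, ∃ C₂ ∈ Ssub 1 n, X = C₁ ⊗ₖ C₂} with hs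
    have hS1 : ∀ C : Matrix (Fin 1 × Fin n) (Fin 1 × Fin n) ℂ, C ∈ Ssub 1 n := by
      intro C
      exact ⟨fun i j => by rw [Subsingleton.elim i j],
        fun i j hij => absurd (Subsingleton.elim i j) hij⟩
    set g : (Fin d₁ × Fin r₁) × (Fin 1 × Fin n) → Fin n × (Fin d₁ × Fin r₁) :=
      fun p => (p.2.2, p.1) with hg
    set X : Matrix ((Fin d₁ × Fin r₁) × (Fin 1 × Fin n))
        ((Fin d₁ × Fin r₁) × (Fin 1 × Fin n)) ℂ := M.submatrix g g with hX
    have hXsum : X = ∑ u : Fin 1 × Fin n, ∑ v : Fin 1 × Fin n,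
        (Matrix.of fun a b : Fin d₁ × Fin r₁ => M (u.2, a) (v.2, b)) ⊗ₖ
          Matrix.single u v (1 : ℂ) := by
      ext ⟨a, w⟩ ⟨b, w'⟩
      simp [Matrix.sum_apply, Matrix.kroneckerMap_apply, Matrix.single, hX,
        Matrix.submatrix_apply, hg, ite_and, mul_ite, mul_one, mul_zero,
        Finset.sum_ite_eq, Finset.sum_ite_eq']
    have hXmem : X ∈ Submodule.span ℂ s := by
      rw [hXsum]
      refine Submodule.sum_mem _ fun u _ => Submodule.sum_mem _ fun v _ => ?_
      exact Submodule.subset_span ⟨_, hM u.2 v.2, _, hS1 _, rfl⟩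
    set L := (QSCAux.tmap Γ' (Fin 1 × Fin n)).comp (Submodule.span ℂ s).subtype with hLdef
    have hL : ∀ (C₁ : ↥(Ssub d₁ r₁)) (C₂ : ↥(Ssub 1 n))
        (h : ((C₁ : Matrix (Fin d₁ × Fin r₁) (Fin d₁ × Fin r₁) ℂ) ⊗ₖ
              (C₂ : Matrix (Fin 1 × Fin n) (Fin 1 × Fin n) ℂ)) ∈ Submodule.span ℂ s),
        L ⟨_, h⟩ = (Γ C₁) ⊗ₖ (C₂ : Matrix (Fin 1 × Fin n) (Fin 1 × Fin n) ℂ) := by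
      intro C₁ C₂ h
      exact tmap_tensor C₁ (C₂ : Matrix (Fin 1 × Fin n) (Fin 1 × Fin n) ℂ)
    have hpsd := hi 1 n L hL ⟨X, hXmem⟩ (hMpsd.submatrix g)
    set f : Fin n × (Fin d₂ × Fin r₂) → (Fin d₂ × Fin r₂) × (Fin 1 × Fin n) :=
      fun p => (p.2, (0, p.1)) with hf
    have key : (Matrix.of fun p q : Fin n × (Fin d₂ × Fin r₂) =>
        Γ ⟨Matrix.of fun a b : Fin d₁ × Fin r₁ => M (p.1, a) (q.1, b),
          hM p.1 q.1⟩ p.2 q.2)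
        = (L ⟨X, hXmem⟩).submatrix f f := by
      ext ⟨k, b⟩ ⟨l, b'⟩
      show Γ _ b b' = QSCAux.tmap Γ' _ X (b, (0, k)) (b', (0, l))
      rw [QSCAux.tmap_apply]
      have hblk : QSCAux.blk2 (Fin d₁ × Fin r₁) ((0 : Fin 1), k) ((0 : Fin 1), l) X
          = Matrix.of fun a b : Fin d₁ × Fin r₁ => M (k, a) (l, b) := rfl
      rw [hblk, hΓ'' _ (hM k l)]
    rw [key]
    exact hpsd.submatrix f
  · -- (ii) → (i)
    intro hii d₃ r₃
    set s : Set (Matrix ((Fin d₁ × Fin r₁) × (Fin d₃ × Fin r₃))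
        ((Fin d₁ × Fin r₁) × (Fin d₃ × Fin r₃)) ℂ) :=
      {X | ∃ C₁ ∈ Ssub d₁ r₁, ∃ C₂ ∈ Ssub d₃ r₃, X = C₁ ⊗ₖ C₂} with hs
    intro L hL X hXpsd
    have hLX : ∀ (x) (hx : x ∈ Submodule.span ℂ s),
        L ⟨x, hx⟩ = QSCAux.tmap Γ' (Fin d₃ × Fin r₃) x := by
      intro x hx
      induction hx using Submodule.span_induction with
      | mem x hmem =>
        obtain ⟨C₁, h₁, C₂, h₂, rfl⟩ := hmem
        exact (hL ⟨C₁, h₁⟩ ⟨C₂, h₂⟩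
          (Submodule.subset_span ⟨C₁, h₁, C₂, h₂, rfl⟩)).trans
          (tmap_tensor ⟨C₁, h₁⟩ C₂).symm
      | zero =>
        rw [show (⟨(0 : Matrix _ _ ℂ), Submodule.zero_mem _⟩ :
          ↥(Submodule.span ℂ s)) = 0 from rfl, map_zero, map_zero]
      | add x y hx hy ihx ihy =>
        rw [show (⟨x + y, Submodule.add_mem _ hx hy⟩ : ↥(Submodule.span ℂ s))
          = ⟨x, hx⟩ + ⟨y, hy⟩ from rfl, map_add, ihx, ihy, map_add]
      | smul a x hx ih =>
        rw [show (⟨a • x, Submodule.smul_mem _ a hx⟩ : ↥(Submodule.span ℂ s))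
          = a • ⟨x, hx⟩ from rfl, map_smul, ih, map_smul]
    have hblkmem : ∀ (u v : Fin d₃ × Fin r₃) (y)
        (_ : y ∈ Submodule.span ℂ s),
        QSCAux.blk2 (Fin d₁ × Fin r₁) u v y ∈ Ssub d₁ r₁ := by
      intro u v y hy
      refine Submodule.span_le
        (p := (Ssub d₁ r₁).comap (QSCAux.blk2 (Fin d₁ × Fin r₁) u v)) |>.mpr ?_ hy
      rintro z ⟨C₁, h₁, C₂, h₂, rfl⟩
      show QSCAux.blk2 _ u v (C₁ ⊗ₖ C₂) ∈ Ssub d₁ r₁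
      rw [QSCAux.blk2_kron]
      exact Submodule.smul_mem _ _ h₁
    obtain ⟨x, hx⟩ := X
    rw [hLX x hx]
    set e : Fin (d₃ * r₃) ≃ Fin d₃ × Fin r₃ := finProdFinEquiv.symm with he
    set g : Fin (d₃ * r₃) × (Fin d₁ × Fin r₁) → (Fin d₁ × Fin r₁) × (Fin d₃ × Fin r₃) :=
      fun p => (p.2, e p.1) with hg
    set M : Matrix (Fin (d₃ * r₃) × (Fin d₁ × Fin r₁))
        (Fin (d₃ * r₃) × (Fin d₁ × Fin r₁)) ℂ := x.submatrix g g with hMdef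
    have hM : ∀ k l : Fin (d₃ * r₃),
        (Matrix.of fun a b : Fin d₁ × Fin r₁ => M (k, a) (l, b)) ∈ Ssub d₁ r₁ :=
      fun k l => hblkmem (e k) (e l) x hx
    have hpsd := hii (d₃ * r₃) M hM (hXpsd.submatrix g)
    set f : (Fin d₂ × Fin r₂) × (Fin d₃ × Fin r₃) → Fin (d₃ * r₃) × (Fin d₂ × Fin r₂) :=
      fun p => (e.symm p.2, p.1) with hf
    have key : QSCAux.tmap Γ' (Fin d₃ × Fin r₃) x
        = (Matrix.of fun p q : Fin (d₃ * r₃) × (Fin d₂ × Fin r₂) =>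
            Γ ⟨Matrix.of fun a b : Fin d₁ × Fin r₁ => M (p.1, a) (q.1, b),
              hM p.1 q.1⟩ p.2 q.2).submatrix f f := by
      ext ⟨b, u⟩ ⟨b', v⟩
      show QSCAux.tmap Γ' _ x (b, u) (b', v) = Γ ⟨_, hM (e.symm u) (e.symm v)⟩ b b'
      rw [QSCAux.tmap_apply, ← hΓ'' _ (hM (e.symm u) (e.symm v))]
      have hx' : (Matrix.of fun a c : Fin d₁ × Fin r₁ =>
          M (e.symm u, a) (e.symm v, c)) = QSCAux.blk2 (Fin d₁ × Fin r₁) u v x := by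
        ext a c
        show x (a, e (e.symm u)) (c, e (e.symm v)) = x (a, u) (c, v)
        rw [Equiv.apply_symm_apply, Equiv.apply_symm_apply]
      rw [hx']
    rw [key]
    exact hpsd.submatrix f

end
end

section
/- Fix a positive integer r. Define Γ̃₁, Γ̃₂ : M₂(M_r(ℂ)) → ℂ on block matrices by Γ̃₁((P_{ij})_{i,j=1,2}) = Tr(P₁₁) and Γ̃₂((P_{ij})_{i,j=1,2}) = Tr(P₂₂). Then: (a) Γ̃₁ and Γ̃₂ are completely positive; (b) Γ̃₁(C) = 1 = Γ̃₂(C) for every positive semidefinite C with Tr_r(C) = I₂; (c) Γ̃₁(C) = Γ̃₂(C) for all C ∈ S(2,r); and (d) Γ̃₁ ≠ Γ̃₂ as linear maps on M₂(M_r(ℂ)). Hence the superchannel extension of a QSC is not unique. -/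
open scoped Kronecker ComplexOrder Matrix

noncomputable section

lemma isCP_blockTrace (r : ℕ) (i : Fin 2)
    (Γ : Matrix (Fin 2 × Fin r) (Fin 2 × Fin r) ℂ → Matrix (Fin 1) (Fin 1) ℂ)
    (hΓ : ∀ C, Γ C = Matrix.of fun _ _ => ∑ k : Fin r, C (i, k) (i, k)) :
    IsCP Γ := by
  intro n M hM
  have key : mapBlocks Γ M =
      ∑ k : Fin r, M.submatrix (fun p : Fin n × Fin 1 => (p.1, (i, k)))
        (fun q : Fin n × Fin 1 => (q.1, (i, k))) := by
    ext p q
    simp [mapBlocks, hΓ, Matrix.submatrix, Matrix.sum_apply]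
  rw [key]
  exact Finset.sum_induction _ Matrix.PosSemidef (fun a b ha hb => ha.add hb)
    (Matrix.PosSemidef.zero) (fun k _ => hM.submatrix _)

/-- the maps `Γ̃₁(C) = Tr(P₁₁)` and `Γ̃₂(C) = Tr(P₂₂)` on `M₂(M_r(ℂ))`
(with values in `ℂ ≅ M₁(ℂ)`) are completely positive, both send every Choi matrix of a
CPTP map to `1`, they agree on `S(2,r)`, yet they are different maps: the superchannel
extension of a QSC is not unique. -/
theorem superchannel_extension_not_unique (r : ℕ) (hr : 0 < r)
    (Γ₁ Γ₂ : Matrix (Fin 2 × Fin r) (Fin 2 × Fin r) ℂ → Matrix (Fin 1) (Fin 1) ℂ)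
    (hΓ₁ : ∀ C, Γ₁ C = Matrix.of fun _ _ => ∑ k : Fin r, C (0, k) (0, k))
    (hΓ₂ : ∀ C, Γ₂ C = Matrix.of fun _ _ => ∑ k : Fin r, C (1, k) (1, k)) :
    IsCP Γ₁ ∧ IsCP Γ₂ ∧
    (∀ C : Matrix (Fin 2 × Fin r) (Fin 2 × Fin r) ℂ,
      C.PosSemidef → ptrace C = 1 → Γ₁ C = 1 ∧ Γ₂ C = 1) ∧
    (∀ C ∈ Sset 2 r, Γ₁ C = Γ₂ C) ∧
    Γ₁ ≠ Γ₂ := by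
  have hone : ∀ (c : ℂ), (Matrix.of fun _ _ : Fin 1 => c) = c • (1 : Matrix (Fin 1) (Fin 1) ℂ) := by
    intro c
    ext a b
    fin_cases a <;> fin_cases b <;> simp
  refine ⟨isCP_blockTrace r 0 Γ₁ hΓ₁, isCP_blockTrace r 1 Γ₂ hΓ₂, ?_, ?_, ?_⟩
  · intro C _ hpt
    have h0 : btr C 0 0 = 1 := by
      have := congrFun (congrFun hpt 0) 0
      simpa [ptrace, Matrix.one_apply] using this
    have h1 : btr C 1 1 = 1 := by
      have := congrFun (congrFun hpt 1) 1
      simpa [ptrace, Matrix.one_apply] using this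
    constructor
    · rw [hΓ₁]
      have : (∑ k : Fin r, C (0, k) (0, k)) = 1 := h0
      rw [this, hone, one_smul]
    · rw [hΓ₂]
      have : (∑ k : Fin r, C (1, k) (1, k)) = 1 := h1
      rw [this, hone, one_smul]
  · rintro C ⟨hd, _⟩
    rw [hΓ₁, hΓ₂]
    have : btr C 0 0 = btr C 1 1 := hd 0 1
    simpa [btr] using congrArg (fun c => (Matrix.of fun _ _ : Fin 1 => c)) this
  · intro h
    set k0 : Fin r := ⟨0, hr⟩
    set C : Matrix (Fin 2 × Fin r) (Fin 2 × Fin r) ℂ :=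
      Matrix.single ((0 : Fin 2), k0) ((0 : Fin 2), k0) 1 with hC
    have h1 : Γ₁ C 0 0 = 1 := by
      rw [hΓ₁]
      simp [hC, Matrix.single, Finset.sum_ite_eq, Matrix.of_apply]
    have h2 : Γ₂ C 0 0 = 0 := by
      rw [hΓ₂]
      simp [hC, Matrix.single, Matrix.of_apply]
    rw [h, h2] at h1
    exact zero_ne_one h1


end
end

section
/- Define ψ_a, ψ_b : M₂(ℂ) → ℂ by ψ_a(M) = M₁₁ and ψ_b(M) = M₂₂ (the diagonal entries). Then ψ_a and ψ_b are completely positive maps which agree on S(2,1) = {M ∈ M₂(ℂ) : M₁₁ = M₂₂ and M₁₂ = M₂₁ = 0}, yet the maps id_{M₄} ⊗ ψ_a and id_{M₄} ⊗ ψ_b : M₄(ℂ) ⊗ M₂(ℂ) → M₄(ℂ) disagree at a point of S(4,2): for X = I₄ ⊗ diag(1,0), which lies in S(4,2), one has (id_{M₄} ⊗ ψ_a)(X) = I₄ while (id_{M₄} ⊗ ψ_b)(X) = 0. Hence tensor products of different extensions of the same QSC can restrict to different QSCs. -/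
open scoped Kronecker ComplexOrder Matrix

noncomputable section

/-- the completely positive maps `ψ_a(M) = M₁₁` and `ψ_b(M) = M₂₂` on
`M₂(ℂ)` (valued in `ℂ ≅ M₁(ℂ)`) agree on `S(2,1)`, but `id_{M₄} ⊗ ψ_a` and
`id_{M₄} ⊗ ψ_b` disagree at `X = I₄ ⊗ diag(1,0) ∈ S(4,2)`: one gives `I₄`, the other
`0`. Tensor products of different extensions of the same QSC restrict to different
QSCs. -/
theorem tensor_extensions_differ
    (ψa ψb : Matrix (Fin 2) (Fin 2) ℂ → Matrix (Fin 1) (Fin 1) ℂ)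
    (ha : ∀ M, ψa M = Matrix.of fun _ _ => M 0 0)
    (hb : ∀ M, ψb M = Matrix.of fun _ _ => M 1 1) :
    IsCP ψa ∧ IsCP ψb ∧
    (∀ M : Matrix (Fin 2) (Fin 2) ℂ,
      M 0 0 = M 1 1 → M 0 1 = 0 → M 1 0 = 0 → ψa M = ψb M) ∧
    ((1 : Matrix (Fin 4) (Fin 4) ℂ) ⊗ₖ
        (Matrix.diagonal ![1, 0] : Matrix (Fin 2) (Fin 2) ℂ) ∈ Sset 4 2) ∧
    mapBlocks ψa ((1 : Matrix (Fin 4) (Fin 4) ℂ) ⊗ₖ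
        (Matrix.diagonal ![1, 0] : Matrix (Fin 2) (Fin 2) ℂ)) = 1 ∧
    mapBlocks ψb ((1 : Matrix (Fin 4) (Fin 4) ℂ) ⊗ₖ
        (Matrix.diagonal ![1, 0] : Matrix (Fin 2) (Fin 2) ℂ)) = 0 := by
  have hsub : ∀ (k : Fin 2) (ψ : Matrix (Fin 2) (Fin 2) ℂ → Matrix (Fin 1) (Fin 1) ℂ),
      (∀ M, ψ M = Matrix.of fun _ _ => M k k) → IsCP ψ := by
    intro k ψ hψ n M hM
    have : mapBlocks ψ M = M.submatrix (fun p => (p.1, k)) (fun q => (q.1, k)) := by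
      ext p q
      simp [mapBlocks, hψ, Matrix.submatrix]
    rw [this]
    exact hM.submatrix _
  refine ⟨hsub 0 ψa ha, hsub 1 ψb hb, ?_, ?_, ?_, ?_⟩
  · intro M h1 _ _
    rw [ha, hb]
    ext i j
    simp [h1]
  · constructor
    · intro i j
      simp [btr, Matrix.one_apply, Fin.sum_univ_two]
    · intro i j hij
      simp [btr, Matrix.one_apply, hij, Fin.sum_univ_two]
  · ext p q
    simp [mapBlocks, ha, Matrix.one_apply, Prod.ext_iff, Subsingleton.elim p.2 q.2]
  · ext p q
    simp [mapBlocks, hb]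

end
end

section
/- Let d, r be positive integers and let U ∈ M_d(ℂ) ⊗ M_r(ℂ) ≅ M_{dr}(ℂ) be a unitary matrix such that for every C ∈ M_d(M_r(ℂ)) with Tr_r(C) = I_d one has Tr_r(U C U*) = I_d (i.e., the conjugation map C ↦ U C U* is a quantum superchannel). Then there exist unitary matrices U₁ ∈ M_d(ℂ) and U₂ ∈ M_r(ℂ) such that U = U₁ ⊗ U₂. -/
open scoped Kronecker ComplexOrder Matrix

noncomputable section

namespace SuperchannelAux

variable {d r : ℕ}

lemma btr_eq (C : Matrix (Fin d × Fin r) (Fin d × Fin r) ℂ) (i j : Fin d) :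
    btr C i j = ∑ k : Fin r, C (i, k) (j, k) := rfl

lemma ptrace_apply (C : Matrix (Fin d × Fin r) (Fin d × Fin r) ℂ) (i j : Fin d) :
    ptrace C i j = btr C i j := rfl

lemma ptrace_add (C D : Matrix (Fin d × Fin r) (Fin d × Fin r) ℂ) :
    ptrace (C + D) = ptrace C + ptrace D := by
  ext i j; simp [ptrace_apply, Matrix.add_apply, btr_add]

lemma ptrace_smul (c : ℂ) (C : Matrix (Fin d × Fin r) (Fin d × Fin r) ℂ) :
    ptrace (c • C) = c • ptrace C := by
  ext i j; simp [ptrace_apply, Matrix.smul_apply, btr_smul, smul_eq_mul]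

lemma ptrace_sub (C D : Matrix (Fin d × Fin r) (Fin d × Fin r) ℂ) :
    ptrace (C - D) = ptrace C - ptrace D := by
  ext i j
  simp [ptrace_apply, btr_eq, Matrix.sub_apply, Finset.sum_sub_distrib]

lemma ptrace_one : ptrace (1 : Matrix (Fin d × Fin r) (Fin d × Fin r) ℂ) = (r : ℂ) • 1 := by
  ext i j
  simp only [ptrace_apply, btr_eq, Matrix.smul_apply, Matrix.one_apply, Prod.mk.injEq]
  by_cases h : i = j <;> simp [h]

lemma ptrace_kron_one (B : Matrix (Fin d) (Fin d) ℂ) :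
    ptrace (B ⊗ₖ (1 : Matrix (Fin r) (Fin r) ℂ)) = (r : ℂ) • B := by
  ext i j
  simp [ptrace_apply, btr_eq, Matrix.one_apply]

/-- `ptrace` as a linear map. -/
def ptraceL (d r : ℕ) : Matrix (Fin d × Fin r) (Fin d × Fin r) ℂ →ₗ[ℂ] Matrix (Fin d) (Fin d) ℂ where
  toFun := ptrace
  map_add' := ptrace_add
  map_smul' := ptrace_smul

/-- Conjugation `C ↦ U C Uᴴ` as a linear map. -/
def conjL (d r : ℕ) (U : Matrix (Fin d × Fin r) (Fin d × Fin r) ℂ) :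
    Matrix (Fin d × Fin r) (Fin d × Fin r) ℂ →ₗ[ℂ] Matrix (Fin d × Fin r) (Fin d × Fin r) ℂ where
  toFun C := U * C * Uᴴ
  map_add' C D := by rw [Matrix.mul_add, Matrix.add_mul]
  map_smul' c C := by simp [Matrix.mul_smul, Matrix.smul_mul]

lemma kron_one_inj (hr : 0 < r) (B B' : Matrix (Fin d) (Fin d) ℂ)
    (h : B ⊗ₖ (1 : Matrix (Fin r) (Fin r) ℂ) = B' ⊗ₖ 1) : B = B' := by
  ext i j
  have := congrFun (congrFun h (i, ⟨0, hr⟩)) (j, ⟨0, hr⟩)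
  simpa [Matrix.one_apply] using this

lemma one_kron_inj (hd : 0 < d) (B B' : Matrix (Fin r) (Fin r) ℂ)
    (h : (1 : Matrix (Fin d) (Fin d) ℂ) ⊗ₖ B = 1 ⊗ₖ B') : B = B' := by
  ext a b
  have := congrFun (congrFun h (⟨0, hd⟩, a)) (⟨0, hd⟩, b)
  simpa [Matrix.one_apply] using this

lemma kron_conjTranspose (A : Matrix (Fin d) (Fin d) ℂ) (B : Matrix (Fin r) (Fin r) ℂ) :
    (A ⊗ₖ B)ᴴ = Aᴴ ⊗ₖ Bᴴ := by
  ext ⟨i, a⟩ ⟨j, b⟩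
  simp [Matrix.conjTranspose_apply, mul_comm]

lemma trace_conjTranspose_mul_self_eq_zero {n : Type*} [Fintype n] [DecidableEq n]
    (K : Matrix n n ℂ) (h : (Kᴴ * K).trace = 0) : K = 0 := by
  have h1 : (Kᴴ * K).trace = ((∑ x : n, ∑ y : n, Complex.normSq (K y x) : ℝ) : ℂ) := by
    push_cast
    simp only [Matrix.trace, Matrix.diag, Matrix.mul_apply, Matrix.conjTranspose_apply]
    refine Finset.sum_congr rfl fun x _ => Finset.sum_congr rfl fun y _ => ?_
    rw [Complex.normSq_eq_conj_mul_self]; rfl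
  rw [h1] at h
  have h2 : (∑ x : n, ∑ y : n, Complex.normSq (K y x) : ℝ) = 0 := by exact_mod_cast h
  ext y x
  have hx : ∀ x ∈ Finset.univ, (0:ℝ) ≤ ∑ y : n, Complex.normSq (K y x) :=
    fun x _ => Finset.sum_nonneg fun y _ => Complex.normSq_nonneg _
  have h3 := (Finset.sum_eq_zero_iff_of_nonneg hx).mp h2 x (Finset.mem_univ x)
  have h4 := (Finset.sum_eq_zero_iff_of_nonneg
    (fun y _ => Complex.normSq_nonneg (K y x))).mp h3 y (Finset.mem_univ y)
  simpa using Complex.normSq_eq_zero.mp h4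

lemma trace_conjTranspose_mul_kron_one (K : Matrix (Fin d × Fin r) (Fin d × Fin r) ℂ)
    (hK : ptrace K = 0) (B : Matrix (Fin d) (Fin d) ℂ) :
    (Kᴴ * (B ⊗ₖ (1 : Matrix (Fin r) (Fin r) ℂ))).trace = 0 := by
  have hbtr : ∀ i j, btr K i j = 0 := by
    intro i j
    have := congrFun (congrFun hK (i, j).1) (i, j).2
    simpa [ptrace] using this
  have key : (Kᴴ * (B ⊗ₖ (1 : Matrix (Fin r) (Fin r) ℂ))).trace
      = ∑ p : Fin d × Fin r, ∑ j : Fin d, (starRingEnd ℂ) (K (j, p.2) p) * B j p.1 := by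
    simp only [Matrix.trace, Matrix.diag, Matrix.mul_apply, Matrix.conjTranspose_apply,
      Matrix.kronecker_apply, Matrix.one_apply]
    refine Finset.sum_congr rfl fun p _ => ?_
    rw [Fintype.sum_prod_type]
    refine Finset.sum_congr rfl fun j _ => ?_
    refine (Finset.sum_eq_single p.2 (fun b _ hb => by simp [hb]) (by simp)).trans (by simp)
  rw [key, Fintype.sum_prod_type]
  refine Finset.sum_eq_zero fun i _ => ?_
  rw [Finset.sum_comm]
  refine Finset.sum_eq_zero fun j _ => ?_
  have step : ∑ a : Fin r, (starRingEnd ℂ) (K (j, a) (i, a)) * B j i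
      = (starRingEnd ℂ) (btr K j i) * B j i := by
    rw [btr_eq, map_sum, Finset.sum_mul]
  rw [step, hbtr, map_zero, zero_mul]

lemma trace_conj_helper {n : Type*} [Fintype n] [DecidableEq n] (U K X : Matrix n n ℂ) :
    ((Uᴴ * K * U)ᴴ * X).trace = (Kᴴ * (U * X * Uᴴ)).trace := by
  rw [Matrix.conjTranspose_mul, Matrix.conjTranspose_mul, Matrix.conjTranspose_conjTranspose,
    Matrix.trace_mul_cycle, Matrix.trace_mul_comm]
  simp only [Matrix.mul_assoc]

lemma stdBasis_conjT {n : Type*} [DecidableEq n] (i j : n) :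
    (Matrix.single i j (1 : ℂ))ᴴ = Matrix.single j i 1 := by
  ext a b
  simp only [Matrix.conjTranspose_apply, Matrix.single, Matrix.of_apply]
  by_cases h1 : i = b <;> by_cases h2 : j = a <;> simp [h1, h2]

lemma sum_smul_mulVec {n : Type*} [Fintype n] [DecidableEq n] (c : n → ℂ)
    (N : n → Matrix n n ℂ) (v : n → ℂ) (i : n) :
    ((∑ k, c k • N k) *ᵥ v) i = ∑ k, c k * ((N k *ᵥ v) i) := by
  simp only [Matrix.mulVec, dotProduct, Matrix.sum_apply, Matrix.smul_apply,
    smul_eq_mul, Finset.sum_mul, Finset.mul_sum]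
  rw [Finset.sum_comm]
  exact Finset.sum_congr rfl fun k _ => Finset.sum_congr rfl fun m _ => by ring

lemma commutant_form {d r : ℕ} (hd : 0 < d) (V : Matrix (Fin d × Fin r) (Fin d × Fin r) ℂ)
    (hVcomm : ∀ A : Matrix (Fin d) (Fin d) ℂ,
      V * (A ⊗ₖ (1 : Matrix (Fin r) (Fin r) ℂ)) = (A ⊗ₖ (1 : Matrix (Fin r) (Fin r) ℂ)) * V)
    (i : Fin d) (a : Fin r) (p : Fin d) (b : Fin r) :
    V (i, a) (p, b) = if i = p then V (⟨0, hd⟩, a) (⟨0, hd⟩, b) else 0 := by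
  classical
  set i0 : Fin d := ⟨0, hd⟩
  have h := congrFun (congrFun (hVcomm (Matrix.single p i0 1)) (i, a)) (i0, b)
  rw [Matrix.mul_apply, Matrix.mul_apply, Fintype.sum_prod_type, Fintype.sum_prod_type] at h
  simp only [Matrix.kronecker_apply, Matrix.one_apply, Matrix.single, Matrix.of_apply,
    ite_and, mul_ite, ite_mul, one_mul, zero_mul, mul_zero, mul_one, Finset.sum_ite_irrel,
    Finset.sum_const_zero, Finset.sum_ite_eq, Finset.sum_ite_eq', Finset.mem_univ, if_true] at h
  rw [h]
  by_cases hip : i = p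
  · simp [hip]
  · rw [if_neg (fun hh : p = i => hip hh.symm), if_neg hip]

end SuperchannelAux

open SuperchannelAux

set_option maxHeartbeats 1000000 in

/-- every unitary superchannel is conjugation by a tensor product of
unitaries: if `U ∈ M_d ⊗ M_r` is unitary and `C ↦ U C U*` preserves the condition
`Tr_r(C) = I_d`, then `U = U₁ ⊗ U₂` for unitaries `U₁ ∈ M_d`, `U₂ ∈ M_r`. -/
theorem unitary_superchannel_is_tensor (d r : ℕ) (hd : 0 < d) (hr : 0 < r)
    (U : Matrix (Fin d × Fin r) (Fin d × Fin r) ℂ)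
    (hU : U ∈ Matrix.unitaryGroup (Fin d × Fin r) ℂ)
    (hSC : ∀ C : Matrix (Fin d × Fin r) (Fin d × Fin r) ℂ, ptrace C = 1 →
      ptrace (U * C * Uᴴ) = 1) :
    ∃ (U₁ : Matrix (Fin d) (Fin d) ℂ) (U₂ : Matrix (Fin r) (Fin r) ℂ),
      U₁ ∈ Matrix.unitaryGroup (Fin d) ℂ ∧ U₂ ∈ Matrix.unitaryGroup (Fin r) ℂ ∧
      U = U₁ ⊗ₖ U₂ := by
  classical
  have hr' : (r : ℂ) ≠ 0 := Nat.cast_ne_zero.mpr hr.ne'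
  have hUU : Uᴴ * U = 1 := by
    have := hU.1; rwa [Matrix.star_eq_conjTranspose] at this
  have hUU' : U * Uᴴ = 1 := by
    have := hU.2; rwa [Matrix.star_eq_conjTranspose] at this
  have cancel : ∀ X : Matrix (Fin d × Fin r) (Fin d × Fin r) ℂ, Uᴴ * (U * X * Uᴴ) * U = X := by
    intro X
    simp only [Matrix.mul_assoc, hUU, Matrix.mul_one]
    rw [← Matrix.mul_assoc, hUU, one_mul]
  -- Step A: conjugation preserves the kernel of the partial trace
  have hker : ∀ K, ptrace K = 0 → ptrace (U * K * Uᴴ) = 0 := by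
    intro K hK
    have h1 : ptrace (K + (r : ℂ)⁻¹ • 1) = 1 := by
      rw [ptrace_add, hK, ptrace_smul, ptrace_one, zero_add, smul_smul,
        inv_mul_cancel₀ hr', one_smul]
    have h2 := hSC _ h1
    have h3 : U * (K + (r : ℂ)⁻¹ • (1 : Matrix (Fin d × Fin r) (Fin d × Fin r) ℂ)) * Uᴴ
        = U * K * Uᴴ + (r : ℂ)⁻¹ • (1 : Matrix (Fin d × Fin r) (Fin d × Fin r) ℂ) := by
      rw [Matrix.mul_add, Matrix.add_mul]
      congr 1
      rw [Matrix.mul_smul, Matrix.smul_mul, Matrix.mul_one, hUU']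
    rw [h3, ptrace_add, ptrace_smul, ptrace_one, smul_smul, inv_mul_cancel₀ hr', one_smul] at h2
    exact add_eq_right.mp h2
  -- Step A': so does conjugation by the inverse unitary (dimension argument)
  have hkerstar : ∀ K, ptrace K = 0 → ptrace (Uᴴ * K * U) = 0 := by
    have hmap : ∀ x ∈ LinearMap.ker (ptraceL d r),
        (conjL d r U) x ∈ LinearMap.ker (ptraceL d r) := by
      intro x hx
      simp only [LinearMap.mem_ker] at hx ⊢
      exact hker x hx
    have hginj : Function.Injective ((conjL d r U).restrict hmap) := by
      intro x y hxy
      apply Subtype.ext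
      have h1 : (conjL d r U) (x : Matrix (Fin d × Fin r) (Fin d × Fin r) ℂ) = (conjL d r U) y := by
        have := congrArg Subtype.val hxy
        simpa [LinearMap.restrict_apply] using this
      simp only [conjL, LinearMap.coe_mk, AddHom.coe_mk] at h1
      have := congrArg (fun M => Uᴴ * M * U) h1
      simpa [cancel] using this
    have hsurj := LinearMap.injective_iff_surjective.mp hginj
    intro K hK
    obtain ⟨⟨K', hK'⟩, hEq⟩ := hsurj ⟨K, by simpa [LinearMap.mem_ker, ptraceL] using hK⟩
    have hK'k : ptrace K' = 0 := by simpa [LinearMap.mem_ker, ptraceL] using hK'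
    have hUK : U * K' * Uᴴ = K := by
      have := congrArg Subtype.val hEq
      simpa [LinearMap.restrict_apply, conjL] using this
    have h2 : Uᴴ * K * U = K' := by rw [← hUK, cancel]
    rw [h2]; exact hK'k
  -- Step B: conjugation maps `A ⊗ 1` to some `B ⊗ 1`
  have conj_kron : ∀ A : Matrix (Fin d) (Fin d) ℂ,
      ∃ B, U * (A ⊗ₖ (1 : Matrix (Fin r) (Fin r) ℂ)) * Uᴴ = B ⊗ₖ 1 := by
    intro A
    set M := U * (A ⊗ₖ (1 : Matrix (Fin r) (Fin r) ℂ)) * Uᴴ with hM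
    set B := (r : ℂ)⁻¹ • ptrace M with hB
    set K := M - B ⊗ₖ (1 : Matrix (Fin r) (Fin r) ℂ) with hKdef
    have hKker : ptrace K = 0 := by
      rw [hKdef, ptrace_sub, ptrace_kron_one, hB, smul_smul, mul_inv_cancel₀ hr',
        one_smul, sub_self]
    have hKM : (Kᴴ * M).trace = 0 := by
      have h2 : ptrace (Uᴴ * K * U) = 0 := hkerstar K hKker
      have h3 := trace_conjTranspose_mul_kron_one (Uᴴ * K * U) h2 A
      rwa [trace_conj_helper] at h3
    have hKB : (Kᴴ * (B ⊗ₖ (1 : Matrix (Fin r) (Fin r) ℂ))).trace = 0 :=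
      trace_conjTranspose_mul_kron_one K hKker B
    have hKK : (Kᴴ * K).trace = 0 := by
      have h4 : Kᴴ * K = Kᴴ * M - Kᴴ * (B ⊗ₖ (1 : Matrix (Fin r) (Fin r) ℂ)) := by
        rw [← Matrix.mul_sub, ← hKdef]
      rw [h4, Matrix.trace_sub, hKM, hKB, sub_zero]
    have hK0 : K = 0 := trace_conjTranspose_mul_self_eq_zero K hKK
    exact ⟨B, by rwa [hKdef, sub_eq_zero] at hK0⟩
  choose α hα using conj_kron
  -- algebraic properties of α
  have α_one : α 1 = 1 := by
    apply kron_one_inj hr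
    rw [← hα 1, Matrix.one_kronecker_one, Matrix.mul_one, hUU']
  have α_mul : ∀ A B, α (A * B) = α A * α B := by
    intro A B
    apply kron_one_inj hr
    have h1 : (α A * α B) ⊗ₖ (1 : Matrix (Fin r) (Fin r) ℂ)
        = (α A ⊗ₖ (1 : Matrix (Fin r) (Fin r) ℂ)) * (α B ⊗ₖ 1) := by
      rw [← Matrix.mul_kronecker_mul, Matrix.one_mul]
    rw [h1, ← hα A, ← hα B, ← hα (A * B)]
    have h2 : (A * B) ⊗ₖ (1 : Matrix (Fin r) (Fin r) ℂ)
        = (A ⊗ₖ (1 : Matrix (Fin r) (Fin r) ℂ)) * (B ⊗ₖ 1) := by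
      rw [← Matrix.mul_kronecker_mul, Matrix.one_mul]
    rw [h2]
    simp only [Matrix.mul_assoc]
    rw [show Uᴴ * (U * ((B ⊗ₖ (1 : Matrix (Fin r) (Fin r) ℂ)) * Uᴴ))
        = (B ⊗ₖ (1 : Matrix (Fin r) (Fin r) ℂ)) * Uᴴ from by rw [← Matrix.mul_assoc, hUU, one_mul]]
  have α_star : ∀ A, α Aᴴ = (α A)ᴴ := by
    intro A
    apply kron_one_inj hr
    have h1 : (U * (A ⊗ₖ (1 : Matrix (Fin r) (Fin r) ℂ)) * Uᴴ)ᴴ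
        = U * (Aᴴ ⊗ₖ (1 : Matrix (Fin r) (Fin r) ℂ)) * Uᴴ := by
      rw [Matrix.conjTranspose_mul, Matrix.conjTranspose_mul, Matrix.conjTranspose_conjTranspose,
        kron_conjTranspose, Matrix.conjTranspose_one]
      simp only [Matrix.mul_assoc]
    rw [← hα Aᴴ, ← h1, hα A, kron_conjTranspose, Matrix.conjTranspose_one]
  have α_add : ∀ A B, α (A + B) = α A + α B := by
    intro A B
    apply kron_one_inj hr
    rw [Matrix.add_kronecker, ← hα A, ← hα B, ← hα (A + B), Matrix.add_kronecker,
      Matrix.mul_add, Matrix.add_mul]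
  have α_smul : ∀ (c : ℂ) A, α (c • A) = c • α A := by
    intro c A
    apply kron_one_inj hr
    rw [Matrix.smul_kronecker, ← hα A, ← hα (c • A), Matrix.smul_kronecker,
      Matrix.mul_smul, Matrix.smul_mul]
  have α_zero : α 0 = 0 := by
    have := α_smul 0 0
    simpa using this
  have α_inj : ∀ A, α A = 0 → A = 0 := by
    intro A hA
    have h1 : U * (A ⊗ₖ (1 : Matrix (Fin r) (Fin r) ℂ)) * Uᴴ = 0 := by
      rw [hα A, hA, Matrix.zero_kronecker]
    have h2 : A ⊗ₖ (1 : Matrix (Fin r) (Fin r) ℂ) = 0 := by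
      have := congrArg (fun M => Uᴴ * M * U) h1
      simpa [cancel] using this
    apply kron_one_inj hr
    rw [h2, Matrix.zero_kronecker]
  -- build the unitary U₁ implementing α
  set i0 : Fin d := ⟨0, hd⟩ with hi0
  set E : Fin d → Matrix (Fin d) (Fin d) ℂ := fun j => Matrix.single j i0 1 with hE
  set e : Matrix (Fin d) (Fin d) ℂ := α (E i0) with he
  have he_mul : e * e = e := by
    rw [he, ← α_mul, hE]
    rw [Matrix.single_mul_single_same, one_mul]
  have he_star : eᴴ = e := by
    have hEc : (E i0)ᴴ = E i0 := stdBasis_conjT i0 i0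
    rw [he, ← α_star, hEc]
  have he_ne : e ≠ 0 := by
    intro h
    have h1 : E i0 = 0 := α_inj _ h
    have h2 := congrFun (congrFun h1 i0) i0
    rw [hE] at h2
    simp [Matrix.single_apply_same] at h2
  obtain ⟨i1, j1, hij⟩ : ∃ i j, e i j ≠ 0 := by
    by_contra hcon
    push_neg at hcon
    exact he_ne (by ext i j; simpa using hcon i j)
  set u : Fin d → ℂ := e *ᵥ Pi.single j1 1 with hu
  have hu_ne : u ≠ 0 := by
    intro h
    have := congrFun h i1
    rw [hu, Matrix.mulVec_single] at this
    simp at this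
    exact hij this
  have hu_fix : e *ᵥ u = u := by
    rw [hu, Matrix.mulVec_mulVec, he_mul]
  set c : ℝ := ∑ i, Complex.normSq (u i) with hc
  have hc_pos : 0 < c := by
    obtain ⟨i2, hi2⟩ : ∃ i, u i ≠ 0 := by
      by_contra hcon; push_neg at hcon; exact hu_ne (funext hcon)
    exact Finset.sum_pos' (fun i _ => Complex.normSq_nonneg _)
      ⟨i2, Finset.mem_univ _, Complex.normSq_pos.mpr hi2⟩
  set v : Fin d → ℂ := ((Real.sqrt c)⁻¹ : ℂ) • u with hv
  have hv_fix : e *ᵥ v = v := by rw [hv, Matrix.mulVec_smul, hu_fix]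
  have hv_norm : star v ⬝ᵥ v = 1 := by
    rw [hv]
    have hstar : star (((Real.sqrt c)⁻¹ : ℂ) • u) = ((Real.sqrt c)⁻¹ : ℂ) • star u := by
      ext i
      simp [Complex.conj_ofReal]
    rw [hstar, smul_dotProduct, dotProduct_smul]
    have huu : star u ⬝ᵥ u = (c : ℂ) := by
      rw [hc]
      push_cast
      simp only [dotProduct, Pi.star_apply]
      exact Finset.sum_congr rfl fun i _ => by
        rw [Complex.normSq_eq_conj_mul_self]; rfl
    rw [huu, smul_smul, smul_eq_mul]
    rw [show (((Real.sqrt c)⁻¹ : ℂ) * ((Real.sqrt c)⁻¹ : ℂ)) = ((c : ℝ) : ℂ)⁻¹ from by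
      rw [← mul_inv]
      norm_cast
      rw [Real.mul_self_sqrt hc_pos.le]]
    exact inv_mul_cancel₀ (by exact_mod_cast hc_pos.ne')
  set U₁ : Matrix (Fin d) (Fin d) ℂ := Matrix.of fun i j => (α (E j) *ᵥ v) i with hU₁
  -- U₁ is unitary
  have hαEmul : ∀ j j', (α (E j))ᴴ * α (E j') = if j = j' then e else 0 := by
    intro j j'
    have hEc : (E j)ᴴ = Matrix.single i0 j 1 := stdBasis_conjT j i0
    rw [← α_star, hEc, ← α_mul]
    by_cases h : j = j'
    · subst h
      rw [show Matrix.single i0 j (1:ℂ) * E j = E i0 from by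
        rw [show E j = Matrix.single j i0 (1:ℂ) from rfl,
          Matrix.single_mul_single_same, one_mul]]
      rw [if_pos rfl, he]
    · rw [show E j' = Matrix.single j' i0 (1:ℂ) from rfl,
        Matrix.single_mul_single_of_ne (h := h), α_zero, if_neg h]
  have hU1U1 : U₁ᴴ * U₁ = 1 := by
    ext j j'
    have entry : (U₁ᴴ * U₁) j j' = star (α (E j) *ᵥ v) ⬝ᵥ (α (E j') *ᵥ v) := by
      simp [Matrix.mul_apply, Matrix.conjTranspose_apply, dotProduct, hU₁]
    rw [entry, Matrix.star_mulVec, Matrix.dotProduct_mulVec, Matrix.vecMul_vecMul, hαEmul]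
    by_cases h : j = j'
    · subst h
      have hve : star v ᵥ* e = star v := by
        have := Matrix.star_mulVec eᴴ v
        rw [Matrix.conjTranspose_conjTranspose] at this
        rw [← this, he_star, hv_fix]
      rw [if_pos rfl, hve, hv_norm, Matrix.one_apply_eq]
    · rw [if_neg h, Matrix.vecMul_zero, zero_dotProduct, Matrix.one_apply_ne h]
  have hU1mem : U₁ ∈ Matrix.unitaryGroup (Fin d) ℂ := by
    rw [Matrix.mem_unitaryGroup_iff', Matrix.star_eq_conjTranspose]
    exact hU1U1
  have hU1U1' : U₁ * U₁ᴴ = 1 := by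
    rw [← Matrix.star_eq_conjTranspose]
    exact Matrix.mem_unitaryGroup_iff.mp hU1mem
  -- U₁ intertwines α with the identity
  have hAE : ∀ (A : Matrix (Fin d) (Fin d) ℂ) j,
      A * E j = ∑ k, A k j • E k := by
    intro A j
    ext p q
    rw [hE]
    simp only [Matrix.mul_apply, Matrix.single, Matrix.of_apply, Matrix.sum_apply,
      Matrix.smul_apply, smul_eq_mul, mul_ite, mul_one, mul_zero]
    by_cases hq : i0 = q
    · simp [hq]
    · simp [hq]
  have hcomm : ∀ A, α A * U₁ = U₁ * A := by
    intro A
    ext i j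
    have h1 : (α A * U₁) i j = ((α A * α (E j)) *ᵥ v) i := by
      simp only [Matrix.mul_apply, hU₁, Matrix.of_apply, Matrix.mulVec, dotProduct,
        Finset.mul_sum, Finset.sum_mul]
      rw [Finset.sum_comm]
      exact Finset.sum_congr rfl fun m _ => Finset.sum_congr rfl fun k _ => by ring
    rw [h1, ← α_mul, hAE A j]
    have h2 : α (∑ k, A k j • E k) = ∑ k, A k j • α (E k) := by
      rw [show (∑ k, A k j • E k) = ∑ k ∈ Finset.univ, A k j • E k from rfl]
      induction (Finset.univ : Finset (Fin d)) using Finset.induction with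
      | empty => simpa using α_zero
      | insert _ _ hnotmem ih =>
        rw [Finset.sum_insert hnotmem, Finset.sum_insert hnotmem, α_add, α_smul, ih]
    rw [h2, sum_smul_mulVec]
    simp only [Matrix.mul_apply, hU₁, Matrix.of_apply]
    exact Finset.sum_congr rfl fun k _ => by ring
  have hαU1 : ∀ A, α A = U₁ * A * U₁ᴴ := by
    intro A
    have := congrArg (fun M => M * U₁ᴴ) (hcomm A)
    simpa [Matrix.mul_assoc, hU1U1'] using this
  -- the residual unitary V commutes with M_d ⊗ 1
  set V : Matrix (Fin d × Fin r) (Fin d × Fin r) ℂ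
    := (U₁ᴴ ⊗ₖ (1 : Matrix (Fin r) (Fin r) ℂ)) * U with hV
  have hVH : Vᴴ = Uᴴ * (U₁ ⊗ₖ (1 : Matrix (Fin r) (Fin r) ℂ)) := by
    rw [hV, Matrix.conjTranspose_mul, kron_conjTranspose, Matrix.conjTranspose_one,
      Matrix.conjTranspose_conjTranspose]
  have hVV : Vᴴ * V = 1 := by
    rw [hVH, hV]
    calc Uᴴ * (U₁ ⊗ₖ (1 : Matrix (Fin r) (Fin r) ℂ))
          * ((U₁ᴴ ⊗ₖ (1 : Matrix (Fin r) (Fin r) ℂ)) * U)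
        = Uᴴ * ((U₁ * U₁ᴴ) ⊗ₖ ((1 : Matrix (Fin r) (Fin r) ℂ) * 1)) * U := by
          rw [Matrix.mul_kronecker_mul]
          simp only [Matrix.mul_assoc]
      _ = 1 := by rw [hU1U1', Matrix.one_mul, Matrix.one_kronecker_one, Matrix.mul_one, hUU]
  have hVcomm : ∀ A : Matrix (Fin d) (Fin d) ℂ,
      V * (A ⊗ₖ (1 : Matrix (Fin r) (Fin r) ℂ)) = (A ⊗ₖ (1 : Matrix (Fin r) (Fin r) ℂ)) * V := by
    intro A
    have h1 : V * (A ⊗ₖ (1 : Matrix (Fin r) (Fin r) ℂ)) * Vᴴ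
        = A ⊗ₖ (1 : Matrix (Fin r) (Fin r) ℂ) := by
      rw [hV, hVH]
      have h2 : (U₁ᴴ ⊗ₖ (1 : Matrix (Fin r) (Fin r) ℂ)) * U
            * (A ⊗ₖ (1 : Matrix (Fin r) (Fin r) ℂ)) * (Uᴴ * (U₁ ⊗ₖ (1 : Matrix (Fin r) (Fin r) ℂ)))
          = (U₁ᴴ ⊗ₖ (1 : Matrix (Fin r) (Fin r) ℂ)) * (U * (A ⊗ₖ (1 : Matrix (Fin r) (Fin r) ℂ)) * Uᴴ)
            * (U₁ ⊗ₖ (1 : Matrix (Fin r) (Fin r) ℂ)) := by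
        simp only [Matrix.mul_assoc]
      rw [h2, hα A, hαU1 A, ← Matrix.mul_kronecker_mul, ← Matrix.mul_kronecker_mul,
        Matrix.one_mul, Matrix.one_mul]
      rw [show U₁ᴴ * (U₁ * A * U₁ᴴ) * U₁ = A from by
        calc U₁ᴴ * (U₁ * A * U₁ᴴ) * U₁ = U₁ᴴ * (U₁ * (A * (U₁ᴴ * U₁))) := by
              simp only [Matrix.mul_assoc]
          _ = A := by rw [hU1U1, Matrix.mul_one, ← Matrix.mul_assoc, hU1U1, Matrix.one_mul]]
    have := congrArg (fun M => M * V) h1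
    simpa [Matrix.mul_assoc, hVV] using this
  -- V has the form 1 ⊗ U₂
  set U₂ : Matrix (Fin r) (Fin r) ℂ := Matrix.of fun a b => V (i0, a) (i0, b) with hU₂
  have hVform : ∀ i a p b, V (i, a) (p, b) = if i = p then V (i0, a) (i0, b) else 0 := by
    intro i a p b
    exact commutant_form hd V hVcomm i a p b
  have hVeq : V = (1 : Matrix (Fin d) (Fin d) ℂ) ⊗ₖ U₂ := by
    ext ⟨i, a⟩ ⟨p, b⟩
    rw [hVform i a p b]
    simp only [Matrix.kronecker_apply, Matrix.one_apply, hU₂, Matrix.of_apply, ite_mul, one_mul,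
      zero_mul]
  -- U₂ is unitary
  have hU2U2 : U₂ᴴ * U₂ = 1 := by
    apply one_kron_inj hd
    have h1 : ((1 : Matrix (Fin d) (Fin d) ℂ) ⊗ₖ U₂)ᴴ * ((1 : Matrix (Fin d) (Fin d) ℂ) ⊗ₖ U₂)
        = (1 : Matrix (Fin d) (Fin d) ℂ) ⊗ₖ (U₂ᴴ * U₂) := by
      rw [kron_conjTranspose, Matrix.conjTranspose_one, ← Matrix.mul_kronecker_mul,
        Matrix.one_mul]
    rw [← h1, ← hVeq, hVV, Matrix.one_kronecker_one]
  have hU2mem : U₂ ∈ Matrix.unitaryGroup (Fin r) ℂ := by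
    rw [Matrix.mem_unitaryGroup_iff', Matrix.star_eq_conjTranspose]
    exact hU2U2
  refine ⟨U₁, U₂, hU1mem, hU2mem, ?_⟩
  have : (U₁ ⊗ₖ (1 : Matrix (Fin r) (Fin r) ℂ)) * V = U := by
    rw [hV, ← Matrix.mul_assoc, ← Matrix.mul_kronecker_mul, hU1U1', Matrix.one_mul,
      Matrix.one_kronecker_one, Matrix.one_mul]
  rw [← this, hVeq, ← Matrix.mul_kronecker_mul, Matrix.mul_one, Matrix.one_mul]

end
end
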